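/- There exist reals $s_0 = 1$, $s_1 = 1/2$, $s_4 = 1/16$ such that for all reals $s_2, s_3$, the Hankel matrix $\begin{pmatrix} s_0 & s_1 & s_2 \\ s_1 & s_2 & s_3 \\ s_2 & s_3 & s_4 \end{pmatrix}$ is not positive definite. Consequently the pattern $\{0,1,4\}$ for $3\times 3$ Hankel matrices is not positive definite completable. -/

import Mathlib

theorem stmt_13 :
    ∃ s₀ s₁ s₄ : ℝ, s₀ = 1 ∧ s₁ = 1 / 2 ∧ s₄ = 1 / 16 ∧
      ∀ s₂ s₃ : ℝ, ¬ (!![s₀, s₁, s₂; s₁, s₂, s₃; s₂, s₃, s₄]).PosDef := by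
  refine ⟨1, 1/2, 1/16, rfl, rfl, rfl, ?_⟩
  intro s₂ s₃ h
  have h1 := h.dotProduct_mulVec_pos (x := (![-1/2, 1, 0] : Fin 3 → ℝ)) (by intro hx; have := congrFun hx 1; simp at this)
  have h2 := h.dotProduct_mulVec_pos (x := (![-1/4, 0, 1] : Fin 3 → ℝ)) (by intro hx; have := congrFun hx 2; simp at this)
  simp [dotProduct, Matrix.mulVec, Fin.sum_univ_three] at h1 h2
  nlinarith [h1, h2]
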